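/- Let π: L(p) → L(q) be an admissible homomorphism with kernel of order n. Then π(c) = n·d, where c and d are the canonical elements of L(p) and L(q) respectively. -/

import Mathlib

open scoped BigOperators

def stringRelators {ι : Type} [DecidableEq ι] (p : ι → ℕ) : Set (ι → ℤ) :=
  { v | ∃ i j : ι, v = (p i : ℤ) • Pi.single i 1 - (p j : ℤ) • Pi.single j 1 }

abbrev StringGroup {ι : Type} [DecidableEq ι] (p : ι → ℕ) : Type :=
  (ι → ℤ) ⧸ AddSubgroup.closure (stringRelators p)

def xgen {ι : Type} [DecidableEq ι] (p : ι → ℕ) (i : ι) : StringGroup p :=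
  QuotientAddGroup.mk (Pi.single i 1)

def canon {ι : Type} [DecidableEq ι] (p : ι → ℕ) (i : ι) : StringGroup p :=
  (p i : ℤ) • xgen p i

def IsEffective {κ : Type} [DecidableEq κ] (q : κ → ℕ) (H : AddSubgroup (StringGroup q)) : Prop :=
  ∀ j : κ, ∀ ρ : StringGroup q →+ ZMod (q j),
    (∀ k, ρ (xgen q k) = if k = j then 1 else 0) →
    ∀ y : ZMod (q j), ∃ x ∈ H, ρ x = y

def Admissible {ι κ : Type} [DecidableEq ι] [DecidableEq κ]
    (p : ι → ℕ) (q : κ → ℕ)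
    (multp : StringGroup p → ℕ) (multq : StringGroup q → ℕ)
    (π : StringGroup p →+ StringGroup q) : Prop :=
  IsEffective q π.range ∧
  ∀ z ∈ Set.range π, (∑ᶠ x ∈ π ⁻¹' {z}, multp x) = multq z


section Aux
variable {N : ℕ} (p : Fin (N+1) → ℕ) (hp : ∀ i, 2 ≤ p i)

private def degAux : (Fin (N+1) → ℤ) →+ ℚ where
  toFun v := ∑ i, (v i : ℚ) / (p i)
  map_zero' := by simp
  map_add' v w := by
    simp [add_div, Finset.sum_add_distrib]

lemma degAux_single (i : Fin (N+1)) (z : ℤ) : degAux p (z • Pi.single i 1) = z / p i := by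
  simp only [degAux, AddMonoidHom.coe_mk, ZeroHom.coe_mk]
  rw [Finset.sum_eq_single i]
  · simp
  · intro b _ hb; simp [Pi.single_apply, hb]
  · simp

noncomputable def deg : StringGroup p →+ ℚ :=
  QuotientAddGroup.lift _ (degAux p) (by
    refine (AddSubgroup.closure_le _).2 ?_
    rintro v ⟨i, j, rfl⟩
    simp only [SetLike.mem_coe]
    have hi : (p i : ℚ) ≠ 0 := by have := hp i; positivity
    have hj : (p j : ℚ) ≠ 0 := by have := hp j; positivity
    rw [AddMonoidHom.mem_ker, map_sub, degAux_single, degAux_single]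
    field_simp; push_cast; ring)

lemma deg_mk (v : Fin (N+1) → ℤ) : deg p hp (QuotientAddGroup.mk v) = ∑ i, (v i : ℚ) / (p i) := rfl

lemma deg_xgen (i : Fin (N+1)) : deg p hp (xgen p i) = 1 / p i := by
  have : deg p hp (xgen p i) = degAux p (Pi.single i 1) := rfl
  rw [this]
  have := degAux_single p i 1
  simpa using this

lemma deg_canon : deg p hp (canon p 0) = 1 := by
  have h0 : (p 0 : ℚ) ≠ 0 := by have := hp 0; positivity
  rw [canon, map_zsmul, deg_xgen]
  field_simp
  rw [zsmul_eq_mul]; push_cast; field_simp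

def chi (j : Fin (N+1)) : StringGroup p →+ ZMod (p j) :=
  QuotientAddGroup.lift _
    ((Int.castAddHom (ZMod (p j))).comp (Pi.evalAddMonoidHom (fun _ => ℤ) j)) (by
    refine (AddSubgroup.closure_le _).2 ?_
    rintro v ⟨i, k, rfl⟩
    simp only [SetLike.mem_coe, AddMonoidHom.mem_ker]
    show ((((p i : ℤ) • Pi.single i 1 - (p k : ℤ) • Pi.single k 1 : Fin (N+1) → ℤ) j : ℤ) : ZMod (p j)) = 0
    simp only [Pi.sub_apply, Pi.smul_apply, Pi.single_apply, smul_eq_mul]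
    by_cases hij : j = i
    · subst hij
      by_cases hkj : j = k
      · subst hkj; simp
      · simp [hkj, ZMod.natCast_self]
    · by_cases hkj : j = k
      · subst hkj; simp [hij, ZMod.natCast_self]
      · simp [hij, hkj])

lemma chi_mk (j : Fin (N+1)) (v : Fin (N+1) → ℤ) :
    chi p j (QuotientAddGroup.mk v) = (v j : ZMod (p j)) := rfl

lemma chi_xgen (j i : Fin (N+1)) : chi p j (xgen p i) = if i = j then 1 else 0 := by
  rw [xgen, chi_mk, Pi.single_apply]
  by_cases h : j = i
  · subst h; simp
  · rw [if_neg h, if_neg (fun hh => h hh.symm)]; simp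

lemma chi_canon (j : Fin (N+1)) : chi p j (canon p 0) = 0 := by
  rw [canon, map_zsmul, chi_xgen]
  by_cases h : (0 : Fin (N+1)) = j
  · subst h; simp [ZMod.natCast_self]
  · simp [h]


noncomputable def fr (x : StringGroup p) : ℚ := ∑ j, ((chi p j x).val : ℚ) / (p j)

lemma fr_nonneg (x : StringGroup p) : 0 ≤ fr p x :=
  Finset.sum_nonneg fun j _ => by positivity

include hp in
lemma fr_lt (x : StringGroup p) : fr p x < N + 1 := by
  have : fr p x < ∑ _j : Fin (N+1), (1:ℚ) := by
    refine Finset.sum_lt_sum_of_nonempty Finset.univ_nonempty fun j _ => ?_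
    haveI : NeZero (p j) := ⟨by have := hp j; omega⟩
    have h1 : (chi p j x).val < p j := ZMod.val_lt _
    have h2 : (0:ℚ) < p j := by have := hp j; positivity
    rw [div_lt_one h2]
    exact_mod_cast h1
  simpa using this

include hp in
lemma chi_eq_zero_of_fr_eq_zero (x : StringGroup p) (h : fr p x = 0) (j : Fin (N+1)) :
    chi p j x = 0 := by
  haveI : NeZero (p j) := ⟨by have := hp j; omega⟩
  have h2 : (0:ℚ) < p j := by have := hp j; positivity
  have := (Finset.sum_eq_zero_iff_of_nonneg (fun j _ => by positivity)).1 h j (Finset.mem_univ j)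
  rw [div_eq_zero_iff] at this
  rcases this with h' | h'
  · rw [← ZMod.val_eq_zero]; exact_mod_cast h'
  · exact absurd h' (ne_of_gt h2)

lemma smul_xgen_eq_canon (i : Fin (N+1)) : (p i : ℤ) • xgen p i = canon p 0 := by
  rw [canon, xgen, xgen]
  have h1 : ((p i : ℤ) • Pi.single i 1 - (p 0 : ℤ) • Pi.single 0 1 : Fin (N+1) → ℤ)
      ∈ AddSubgroup.closure (stringRelators p) :=
    AddSubgroup.subset_closure ⟨i, 0, rfl⟩
  have := (QuotientAddGroup.eq_zero_iff _).2 h1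
  rw [QuotientAddGroup.mk_sub] at this
  have h2 : ∀ (z : ℤ) (w : Fin (N+1) → ℤ),
      (QuotientAddGroup.mk (z • w) : StringGroup p) = z • QuotientAddGroup.mk w := by
    intro z w
    exact map_zsmul (QuotientAddGroup.mk' (AddSubgroup.closure (stringRelators p))) z w
  rw [h2, h2] at this
  linear_combination (norm := abel) this

lemma mk_eq_sum (v : Fin (N+1) → ℤ) :
    (QuotientAddGroup.mk v : StringGroup p) = ∑ i, v i • xgen p i := by
  have hv : v = ∑ i, v i • Pi.single i (1:ℤ) := by
    rw [show (∑ i, v i • Pi.single i (1:ℤ)) = ∑ i, Pi.single i (v i) from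
      Finset.sum_congr rfl fun i _ => by ext k; simp [Pi.single_apply]]
    exact (Finset.univ_sum_single v).symm
  conv_lhs => rw [hv]
  rw [show (QuotientAddGroup.mk (∑ i, v i • Pi.single i (1:ℤ)) : StringGroup p)
      = ∑ i, (QuotientAddGroup.mk (v i • Pi.single i (1:ℤ)) : StringGroup p) from
    map_sum (QuotientAddGroup.mk' (AddSubgroup.closure (stringRelators p))) _ _]
  refine Finset.sum_congr rfl fun i _ => ?_
  exact map_zsmul (QuotientAddGroup.mk' (AddSubgroup.closure (stringRelators p))) _ _

include hp in
lemma exists_nf (x : StringGroup p) : ∃ m : ℤ,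
    x = ∑ i, ((chi p i x).val : ℤ) • xgen p i + m • canon p 0 ∧
    (m : ℚ) = deg p hp x - fr p x := by
  induction x using QuotientAddGroup.induction_on with
  | H v =>
  set L : Fin (N+1) → ℤ := fun i => v i % (p i) with hL
  set d : Fin (N+1) → ℤ := fun i => v i / (p i) with hd
  have hppos : ∀ i, (0:ℤ) < p i := fun i => by have := hp i; exact_mod_cast by omega
  have hL0 : ∀ i, 0 ≤ L i := fun i => Int.emod_nonneg _ (ne_of_gt (hppos i))
  have hLlt : ∀ i, L i < p i := fun i => Int.emod_lt_of_pos _ (hppos i)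
  have hv : ∀ i, v i = p i * d i + L i := fun i => (Int.mul_ediv_add_emod _ _).symm
  have hchi : ∀ j, ((chi p j (QuotientAddGroup.mk v)).val : ℤ) = L j := by
    intro j
    haveI : NeZero (p j) := ⟨by have := hp j; omega⟩
    rw [chi_mk, ZMod.val_intCast]
  refine ⟨∑ i, d i, ?_, ?_⟩
  · calc (QuotientAddGroup.mk v : StringGroup p) = ∑ i, v i • xgen p i := mk_eq_sum p v
    _ = ∑ i, (L i • xgen p i + d i • canon p 0) := by
        refine Finset.sum_congr rfl fun i _ => ?_
        rw [← smul_xgen_eq_canon p i, smul_smul, ← add_zsmul]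
        congr 1
        rw [hv i]; ring
    _ = ∑ i, L i • xgen p i + ∑ i, d i • canon p 0 := Finset.sum_add_distrib
    _ = ∑ i, ((chi p i (QuotientAddGroup.mk v)).val : ℤ) • xgen p i + (∑ i, d i) • canon p 0 := by
        refine congrArg₂ (· + ·) ?_ (Finset.sum_smul).symm
        exact Finset.sum_congr rfl fun i _ => by rw [hchi]
  · have hc : ∀ j, ((chi p j (QuotientAddGroup.mk v)).val : ℚ) = (L j : ℚ) := by
      intro j; exact_mod_cast congrArg (fun z : ℤ => (z : ℚ)) (hchi j)
    rw [deg_mk, show fr p (QuotientAddGroup.mk v) = ∑ j, (L j : ℚ) / p j from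
      Finset.sum_congr rfl fun j _ => by rw [hc j]]
    rw [eq_sub_iff_add_eq]
    push_cast
    rw [← Finset.sum_add_distrib]
    refine Finset.sum_congr rfl fun i _ => ?_
    have hpi : (p i : ℚ) ≠ 0 := by have := hp i; positivity
    have key : (v i : ℚ) = p i * (d i : ℚ) + (L i : ℚ) := by
      exact_mod_cast congrArg (fun z : ℤ => (z : ℚ)) (hv i)
    rw [key]
    field_simp

include hp in
noncomputable def mval (x : StringGroup p) : ℤ := ⌊deg p hp x - fr p x⌋

include hp in
lemma mval_cast (x : StringGroup p) : (mval p hp x : ℚ) = deg p hp x - fr p x := by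
  obtain ⟨m, _, hm⟩ := exists_nf p hp x
  rw [mval, ← hm, Int.floor_intCast]

include hp in
lemma nf (x : StringGroup p) :
    x = ∑ i, ((chi p i x).val : ℤ) • xgen p i + mval p hp x • canon p 0 := by
  obtain ⟨m, h1, hm⟩ := exists_nf p hp x
  have : mval p hp x = m := by
    have := mval_cast p hp x
    rw [← hm] at this
    exact_mod_cast this
  rw [this]; exact h1


include hp in
lemma mult_eq (mult : StringGroup p → ℕ)
    (hmult : ∀ (l : Fin (N+1) → ℤ) (m : ℤ), (∀ i, 0 ≤ l i ∧ l i < (p i : ℤ)) →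
      mult (∑ i, l i • xgen p i + m • canon p 0) = (m + 1).toNat)
    (x : StringGroup p) : mult x = (mval p hp x + 1).toNat := by
  have h := hmult (fun i => ((chi p i x).val : ℤ)) (mval p hp x) (fun i => by
    haveI : NeZero (p i) := ⟨by have := hp i; omega⟩
    refine ⟨Int.natCast_nonneg _, ?_⟩
    show ((chi p i x).val : ℤ) < (p i : ℤ)
    exact_mod_cast ZMod.val_lt _)
  rw [← nf p hp x] at h
  exact h

include hp in
lemma fr_zero : fr p 0 = 0 := by
  refine Finset.sum_eq_zero fun j _ => ?_
  haveI : NeZero (p j) := ⟨by have := hp j; omega⟩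
  rw [map_zero, ZMod.val_zero]
  simp

include hp in
lemma mval_zero : mval p hp 0 = 0 := by
  have h := mval_cast p hp 0
  rw [map_zero, fr_zero p hp, sub_zero] at h
  exact_mod_cast h

include hp in
lemma mval_add_nsmul_canon (r : ℕ) (x : StringGroup p) :
    mval p hp (r • canon p 0 + x) = r + mval p hp x := by
  have hchi : ∀ j, chi p j (r • canon p 0 + x) = chi p j x := by
    intro j; rw [map_add, map_nsmul, chi_canon]; simp
  have hfr : fr p (r • canon p 0 + x) = fr p x :=
    Finset.sum_congr rfl fun j _ => by rw [hchi]
  have hdeg : deg p hp (r • canon p 0 + x) = r + deg p hp x := by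
    rw [map_add, map_nsmul, deg_canon p hp]; simp
  have h1 := mval_cast p hp (r • canon p 0 + x)
  rw [hfr, hdeg] at h1
  have h2 := mval_cast p hp x
  have : (mval p hp (r • canon p 0 + x) : ℚ) = ((r + mval p hp x : ℤ) : ℚ) := by
    rw [h1]; push_cast; rw [h2]; ring
  exact_mod_cast this

include hp in
lemma mval_nonpos_of_deg_zero (x : StringGroup p) (h : deg p hp x = 0) :
    -(N:ℤ) ≤ mval p hp x ∧ mval p hp x ≤ 0 := by
  have h1 := mval_cast p hp x
  rw [h, zero_sub] at h1
  have h2 := fr_nonneg p x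
  have h3 := fr_lt p hp x
  constructor
  · have hint : ((-(N:ℤ)-1 : ℤ) : ℚ) < (mval p hp x : ℚ) := by rw [h1]; push_cast; linarith
    have h4 : (-(N:ℤ)-1 : ℤ) < mval p hp x := by exact_mod_cast hint
    omega
  · have : (mval p hp x : ℚ) ≤ 0 := by rw [h1]; linarith
    exact_mod_cast this

include hp in
lemma finite_deg_zero : {x : StringGroup p | deg p hp x = 0}.Finite := by
  haveI : ∀ i, NeZero (p i) := fun i => ⟨by have := hp i; omega⟩
  have hsub : {x : StringGroup p | deg p hp x = 0} ⊆
      Set.image2 (fun (w : ∀ i : Fin (N+1), ZMod (p i)) (m : ℤ) =>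
        ∑ i, ((w i).val : ℤ) • xgen p i + m • canon p 0)
        (Set.univ) (Set.Icc (-(N:ℤ)) 0) := by
    intro x hx
    refine ⟨fun i => chi p i x, Set.mem_univ _, mval p hp x, ?_, (nf p hp x).symm⟩
    have := mval_nonpos_of_deg_zero p hp x hx
    exact Set.mem_Icc.2 this
  exact Set.Finite.subset (Set.Finite.image2 _ Set.finite_univ (Set.finite_Icc _ _)) hsub

end Aux

theorem stmt7 {t s : ℕ} (p : Fin (t+1) → ℕ) (q : Fin (s+1) → ℕ)
    (hp : ∀ i, 2 ≤ p i) (hq : ∀ j, 2 ≤ q j)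
    (multp : StringGroup p → ℕ) (multq : StringGroup q → ℕ)
    (hmultp : ∀ (l : Fin (t+1) → ℤ) (m : ℤ), (∀ i, 0 ≤ l i ∧ l i < (p i : ℤ)) →
      multp (∑ i, l i • xgen p i + m • canon p 0) = (m + 1).toNat)
    (hmultq : ∀ (l : Fin (s+1) → ℤ) (m : ℤ), (∀ j, 0 ≤ l j ∧ l j < (q j : ℤ)) →
      multq (∑ j, l j • xgen q j + m • canon q 0) = (m + 1).toNat)
    (π : StringGroup p →+ StringGroup q)
    (hadm : Admissible p q multp multq π)
    (n : ℕ) (hn : Nat.card π.ker = n) :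
    π (canon p 0) = n • canon q 0 := by
  classical
  obtain ⟨-, hA⟩ := hadm
  have hmp : ∀ x, multp x = (mval p hp x + 1).toNat := mult_eq p hp multp hmultp
  have hmq : ∀ z, multq z = (mval q hq z + 1).toNat := mult_eq q hq multq hmultq
  -- admissibility at 0
  have hA0 : (∑ᶠ x ∈ π ⁻¹' {0}, multp x) = 1 := by
    have h := hA 0 ⟨0, map_zero π⟩
    rw [h, hmq, mval_zero q hq]
    rfl
  -- kernel elements have degree zero
  have hker0 : ∀ x : StringGroup p, π x = 0 → deg p hp x = 0 := by
    intro x hx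
    by_contra hdx
    -- pick y in ker with positive degree
    obtain ⟨y, hy, hdy⟩ : ∃ y : StringGroup p, π y = 0 ∧ 0 < deg p hp y := by
      rcases lt_or_gt_of_ne hdx with h | h
      · exact ⟨-x, by rw [map_neg, hx, neg_zero], by rw [map_neg]; linarith⟩
      · exact ⟨x, hx, h⟩
    obtain ⟨r₀, hr₀⟩ := exists_nat_ge (((t:ℚ)+2) / deg p hp y)
    have hinf : ((π ⁻¹' {0}) ∩ Function.support multp).Infinite := by
      refine Set.infinite_of_injective_forall_mem
        (f := fun r : ℕ => (r₀ + r + 1) • y) ?_ ?_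
      · intro a b hab
        have hab' : (r₀ + a + 1) • y = (r₀ + b + 1) • y := hab
        have : deg p hp ((r₀ + a + 1) • y) = deg p hp ((r₀ + b + 1) • y) := by rw [hab']
        rw [map_nsmul, map_nsmul, nsmul_eq_mul, nsmul_eq_mul] at this
        have : ((r₀ + a + 1 : ℕ) : ℚ) = ((r₀ + b + 1 : ℕ) : ℚ) :=
          mul_right_cancel₀ (ne_of_gt hdy) this
        have : r₀ + a + 1 = r₀ + b + 1 := by exact_mod_cast this
        omega
      · intro r
        refine ⟨?_, ?_⟩
        · show (r₀ + r + 1) • y ∈ π ⁻¹' {0}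
          simp only [Set.mem_preimage, Set.mem_singleton_iff, map_nsmul, hy, smul_zero]
        · show multp ((r₀ + r + 1) • y) ≠ 0
          rw [hmp]
          have hdeg : deg p hp ((r₀ + r + 1) • y) = ((r₀ + r + 1 : ℕ) : ℚ) * deg p hp y := by
            rw [map_nsmul, nsmul_eq_mul]
          have hge : ((t:ℚ)+2) ≤ ((r₀ + r + 1 : ℕ) : ℚ) * deg p hp y := by
            have h1 : ((t:ℚ)+2) ≤ r₀ * deg p hp y := by
              rw [div_le_iff₀ hdy] at hr₀; linarith
            have h2 : (r₀ : ℚ) ≤ ((r₀ + r + 1 : ℕ) : ℚ) := by push_cast; linarith [Nat.cast_nonneg (α := ℚ) r]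
            nlinarith
          have hc := mval_cast p hp ((r₀ + r + 1) • y)
          have hfr := fr_lt p hp ((r₀ + r + 1) • y)
          have : (0:ℚ) < (mval p hp ((r₀ + r + 1) • y) : ℚ) := by
            rw [hc, hdeg]
            push_cast
            push_cast at hge hfr
            linarith
          have hpos : 0 < mval p hp ((r₀ + r + 1) • y) := by exact_mod_cast this
          omega
    have := finsum_mem_eq_zero_of_infinite hinf
    rw [hA0] at this
    exact one_ne_zero this
  -- kernel is finite
  have hKsub : (π.ker : Set (StringGroup p)) ⊆ {x | deg p hp x = 0} := by
    intro x hx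
    exact hker0 x (by rwa [← AddMonoidHom.mem_ker])
  have hKfin : (π.ker : Set (StringGroup p)).Finite :=
    (finite_deg_zero p hp).subset hKsub
  set F : Finset (StringGroup p) := hKfin.toFinset with hF
  have hcardF : F.card = n := by
    rw [← hn, Nat.card_congr (Equiv.refl _)]
    rw [← Set.ncard_coe_finset F, hF, Set.Finite.coe_toFinset]
    exact (Nat.card_coe_set_eq _).symm
  have hn1 : 1 ≤ n := by
    rw [← hcardF]
    refine Finset.card_pos.2 ⟨0, ?_⟩
    rw [hF, Set.Finite.mem_toFinset]
    exact AddSubgroup.zero_mem _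
  set S : ℤ := ∑ k ∈ F, mval p hp k with hS
  have hbound : ∀ k ∈ F, -(t:ℤ) ≤ mval p hp k ∧ mval p hp k ≤ 0 := by
    intro k hk
    refine mval_nonpos_of_deg_zero p hp k (hker0 k ?_)
    rw [hF, Set.Finite.mem_toFinset] at hk
    exact hk
  set g : StringGroup q := π (canon p 0) with hg
  -- preimage structure
  have hpre : ∀ z : StringGroup p, π ⁻¹' {π z} = (fun k => z + k) '' (π.ker : Set _) := by
    intro z; ext x
    simp only [Set.mem_preimage, Set.mem_singleton_iff, Set.mem_image, SetLike.mem_coe,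
      AddMonoidHom.mem_ker]
    constructor
    · intro h
      exact ⟨x - z, by rw [map_sub, h, sub_self], by abel⟩
    · rintro ⟨k, hk, rfl⟩
      rw [map_add, hk, add_zero]
  have key : ∀ r : ℕ, (∑ k ∈ F, (mval p hp k + r + 1).toNat) = multq (r • g) := by
    intro r
    have h1 := hA (π (r • canon p 0)) ⟨_, rfl⟩
    rw [hpre (r • canon p 0)] at h1
    rw [finsum_mem_image (fun a _ b _ h => by exact add_left_cancel h)] at h1
    rw [← Set.Finite.coe_toFinset hKfin, finsum_mem_coe_finset] at h1
    rw [map_nsmul] at h1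
    rw [← h1, ← hF]
    refine Finset.sum_congr rfl fun k _ => ?_
    rw [hmp, mval_add_nsmul_canon p hp r k]
    congr 1
    ring
  -- integer form of key for r ≥ t
  have main : ∀ r : ℕ, t ≤ r → ((multq (r • g) : ℤ)) = S + n * (r + 1) := by
    intro r hr
    rw [← key r]
    rw [Nat.cast_sum]
    have h2 : ∀ k ∈ F, (((mval p hp k + r + 1).toNat : ℤ)) = mval p hp k + r + 1 := by
      intro k hk
      have hb := hbound k hk
      have : (t:ℤ) ≤ r := by exact_mod_cast hr
      omega
    rw [Finset.sum_congr rfl h2, Finset.sum_add_distrib, Finset.sum_add_distrib, ← hS,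
      Finset.sum_const, Finset.sum_const, hcardF]
    push_cast
    ring
  -- value of mval q on r • g for large r
  set R : ℕ := t + S.natAbs + 1 with hR
  have hMr : ∀ r : ℕ, R ≤ r → mval q hq (r • g) = S + n * (r + 1) - 1 := by
    intro r hr
    have h1 := main r (by omega)
    rw [hmq] at h1
    have hpos : 0 < S + (n:ℤ) * (r + 1) := by
      have h3 : (1:ℤ) ≤ n := by exact_mod_cast hn1
      have h4 : ((t + S.natAbs + 1 : ℕ) : ℤ) ≤ r := by exact_mod_cast hr
      have h6 : (1:ℤ)*(r+1) ≤ (n:ℤ)*(r+1) := by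
        have h5 : (0:ℤ) ≤ r + 1 := by positivity
        exact mul_le_mul_of_nonneg_right h3 h5
      push_cast at h4
      omega
    omega
  -- periodicity
  set P : ℕ := ∏ j, q j with hP
  have hP1 : 1 ≤ P := Finset.one_le_prod' fun j _ => by have := hq j; omega
  have hchiP : ∀ (j : Fin (s+1)) (u : StringGroup q), chi q j (P • u) = 0 := by
    intro j u
    rw [map_nsmul, nsmul_eq_mul]
    rw [show ((P : ZMod (q j))) = 0 from (ZMod.natCast_eq_zero_iff _ _).2
      (Finset.dvd_prod_of_mem _ (Finset.mem_univ j))]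
    rw [zero_mul]
  have hfrP : ∀ (a k : ℕ), fr q ((a + k * P) • g) = fr q (a • g) := by
    intro a k
    induction k with
    | zero => simp
    | succ k ih =>
      have he : (a + (k+1) * P) • g = P • g + (a + k * P) • g := by
        rw [← add_nsmul]; congr 1; ring
      have hfr1 : fr q (P • g + (a + k * P) • g) = fr q ((a + k * P) • g) :=
        Finset.sum_congr rfl fun j _ => by rw [map_add, hchiP, zero_add]
      rw [he, hfr1, ih]
  -- fr is determined on large multiples
  have hfrconst : ∀ r : ℕ, R ≤ r →
      fr q (r • g) = (r : ℚ) * deg q hq g - ((S + n * (r+1) - 1 : ℤ) : ℚ) := by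
    intro r hr
    have h1 := hMr r hr
    have h2 := mval_cast q hq (r • g)
    rw [h1, map_nsmul, nsmul_eq_mul] at h2
    linarith [h2]
  -- degree of g equals n
  have hD : deg q hq g = n := by
    have h1 := hfrconst R le_rfl
    have h2 := hfrconst (R + P) (by omega)
    have h3 : fr q ((R + P) • g) = fr q (R • g) := by
      have := hfrP R 1
      rw [one_mul] at this
      exact this
    rw [h3, h1] at h2
    have hPne : ((P:ℚ)) ≠ 0 := by
      have : (0:ℚ) < P := by exact_mod_cast hP1
      linarith
    push_cast at h2
    have h4 : (P:ℚ) * deg q hq g = (P:ℚ) * n := by ring_nf; ring_nf at h2; linarith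
    exact mul_left_cancel₀ hPne h4
  -- fr is the constant 1 - S - n on large multiples
  have hfrC : ∀ r : ℕ, R ≤ r → fr q (r • g) = ((1 - S - (n:ℤ) : ℤ) : ℚ) := by
    intro r hr
    have h1 := hfrconst r hr
    rw [hD] at h1
    rw [h1]
    push_cast
    ring
  -- the constant is 0, via r = R * P being a multiple of P
  have hC0 : ((1 - S - (n:ℤ) : ℤ) : ℚ) = 0 := by
    have h1 := hfrC (R * P) (Nat.le_mul_of_pos_right R hP1)
    have h2 := hfrP 0 R
    rw [zero_add, zero_nsmul, fr_zero q hq] at h2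
    rw [h1] at h2
    exact h2
  -- fr q g = 0
  have hfrg : fr q g = 0 := by
    have h1 := hfrP 1 R
    have h2 := hfrC (1 + R * P) (by
      have := Nat.le_mul_of_pos_right R hP1
      omega)
    rw [h1, one_nsmul] at h2
    rw [h2, hC0]
  have hchig : ∀ j, chi q j g = 0 := chi_eq_zero_of_fr_eq_zero q hq g hfrg
  -- mval q g = n
  have hmvg : mval q hq g = (n:ℤ) := by
    have h1 := mval_cast q hq g
    rw [hfrg, hD, sub_zero] at h1
    exact_mod_cast h1
  -- conclude via the normal form
  have hnf := nf q hq g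
  rw [hmvg] at hnf
  have hzero : ∀ j : Fin (s+1), ((chi q j g).val : ℤ) • xgen q j = 0 := by
    intro j
    haveI : NeZero (q j) := ⟨by have := hq j; omega⟩
    rw [hchig j, ZMod.val_zero]
    simp
  rw [Finset.sum_congr rfl fun j _ => hzero j, Finset.sum_const_zero, zero_add] at hnf
  rw [hnf, natCast_zsmul]
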